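/- Let V be an oriented 4-dimensional real inner product space. If a ∈ Λ²₊V and b ∈ Λ²₋V, then the endomorphisms K_a and K_b of V commute: K_a ∘ K_b = K_b ∘ K_a. -/

import Mathlib

set_option linter.unusedSectionVars false
set_option maxHeartbeats 4000000



open scoped RealInnerProductSpace
open Module

namespace Stmt2Aux

def Zeps (i j k l : Fin 4) : ℤ :=
  Matrix.det (Matrix.of fun r c => if ![i,j,k,l] c = r then (1:ℤ) else 0)

def ZZ (i j k l : Fin 4) : ℤ :=
  (((j:ℤ)-(i:ℤ))*((k:ℤ)-(i:ℤ))*((l:ℤ)-(i:ℤ))*((k:ℤ)-(j:ℤ))*((l:ℤ)-(j:ℤ))*((l:ℤ)-(k:ℤ)))/12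

lemma Zeps_eq : ∀ i j k l : Fin 4, Zeps i j k l = ZZ i j k l := by decide

lemma fz0 : ((0:Fin 4):ℤ) = 0 := rfl
lemma fz1 : ((1:Fin 4):ℤ) = 1 := rfl
lemma fz2 : ((2:Fin 4):ℤ) = 2 := rfl
lemma fz3 : ((3:Fin 4):ℤ) = 3 := rfl

section Vol
variable {V : Type*} [NormedAddCommGroup V] [InnerProductSpace ℝ V]
  [FiniteDimensional ℝ V] [Fact (finrank ℝ V = 4)]

lemma volONB (ω : Orientation ℝ V (Fin 4)) (f : OrthonormalBasis (Fin 4) ℝ V)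
    (hf : f.toBasis.orientation = ω) (i j k l : Fin 4) :
    ω.volumeForm ![f i, f j, f k, f l] = ((ZZ i j k l : ℤ) : ℝ) := by
  rw [ω.volumeForm_robust f hf, Basis.det_apply]
  have hm : f.toBasis.toMatrix ![f i, f j, f k, f l]
      = (Matrix.of fun r c => if ![i,j,k,l] c = r then (1:ℤ) else 0).map (Int.cast) := by
    ext r c
    have h1 : (![f i, f j, f k, f l] : Fin 4 → V) c = f (![i,j,k,l] c) := by
      fin_cases c <;> rfl
    rw [Basis.toMatrix_apply, h1, OrthonormalBasis.coe_toBasis_repr_apply,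
      OrthonormalBasis.repr_apply_apply]
    rw [orthonormal_iff_ite.mp f.orthonormal]
    simp [Matrix.map_apply, eq_comm]
  rw [hm]
  rw [show (Matrix.of fun r c => if ![i,j,k,l] c = r then (1:ℤ) else 0).map (Int.cast)
      = (Int.castRingHom ℝ).mapMatrix (Matrix.of fun r c => if ![i,j,k,l] c = r then (1:ℤ) else 0) from rfl,
    ← RingHom.map_det, ← Zeps, Zeps_eq]
  rfl

end Vol

section Lin
variable {M : Type*} [AddCommGroup M] [Module ℝ M] (f : AlternatingMap ℝ M ℝ (Fin 4))

lemma upd0 (x y z t x' : M) : Function.update ![x,y,z,t] 0 x' = ![x',y,z,t] := by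
  ext i; fin_cases i <;> simp [Function.update]
lemma upd1 (x y z t y' : M) : Function.update ![x,y,z,t] 1 y' = ![x,y',z,t] := by
  ext i; fin_cases i <;> simp [Function.update]
lemma upd2 (x y z t z' : M) : Function.update ![x,y,z,t] 2 z' = ![x,y,z',t] := by
  ext i; fin_cases i <;> simp [Function.update]
lemma upd3 (x y z t t' : M) : Function.update ![x,y,z,t] 3 t' = ![x,y,z,t'] := by
  ext i; fin_cases i <;> simp [Function.update]

lemma add0 (x x' y z t : M) : f ![x + x', y, z, t] = f ![x,y,z,t] + f ![x',y,z,t] := by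
  have h := f.map_update_add ![x,y,z,t] 0 x x'
  rwa [upd0, upd0, upd0] at h
lemma smul0 (r : ℝ) (x y z t : M) : f ![r • x, y, z, t] = r * f ![x,y,z,t] := by
  have h := f.map_update_smul ![x,y,z,t] 0 r x
  rwa [upd0, upd0, smul_eq_mul] at h
lemma add1 (x y y' z t : M) : f ![x, y + y', z, t] = f ![x,y,z,t] + f ![x,y',z,t] := by
  have h := f.map_update_add ![x,y,z,t] 1 y y'
  rwa [upd1, upd1, upd1] at h
lemma smul1 (r : ℝ) (x y z t : M) : f ![x, r • y, z, t] = r * f ![x,y,z,t] := by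
  have h := f.map_update_smul ![x,y,z,t] 1 r y
  rwa [upd1, upd1, smul_eq_mul] at h
lemma add2 (x y z z' t : M) : f ![x, y, z + z', t] = f ![x,y,z,t] + f ![x,y,z',t] := by
  have h := f.map_update_add ![x,y,z,t] 2 z z'
  rwa [upd2, upd2, upd2] at h
lemma smul2 (r : ℝ) (x y z t : M) : f ![x, y, r • z, t] = r * f ![x,y,z,t] := by
  have h := f.map_update_smul ![x,y,z,t] 2 r z
  rwa [upd2, upd2, smul_eq_mul] at h
lemma add3 (x y z t t' : M) : f ![x, y, z, t + t'] = f ![x,y,z,t] + f ![x,y,z,t'] := by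
  have h := f.map_update_add ![x,y,z,t] 3 t t'
  rwa [upd3, upd3, upd3] at h
lemma smul3 (r : ℝ) (x y z t : M) : f ![x, y, z, r • t] = r * f ![x,y,z,t] := by
  have h := f.map_update_smul ![x,y,z,t] 3 r t
  rwa [upd3, upd3, smul_eq_mul] at h

lemma sum0 (cf : Fin 4 → ℝ) (v : Fin 4 → M) (y z t : M) :
    f ![∑ i, cf i • v i, y, z, t] = ∑ i, cf i * f ![v i, y, z, t] := by
  rw [Fin.sum_univ_four, Fin.sum_univ_four, add0, add0, add0, smul0, smul0, smul0, smul0]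
lemma sum1 (cf : Fin 4 → ℝ) (v : Fin 4 → M) (x z t : M) :
    f ![x, ∑ i, cf i • v i, z, t] = ∑ i, cf i * f ![x, v i, z, t] := by
  rw [Fin.sum_univ_four, Fin.sum_univ_four, add1, add1, add1, smul1, smul1, smul1, smul1]
lemma sum2 (cf : Fin 4 → ℝ) (v : Fin 4 → M) (x y t : M) :
    f ![x, y, ∑ i, cf i • v i, t] = ∑ i, cf i * f ![x, y, v i, t] := by
  rw [Fin.sum_univ_four, Fin.sum_univ_four, add2, add2, add2, smul2, smul2, smul2, smul2]
lemma sum3 (cf : Fin 4 → ℝ) (v : Fin 4 → M) (x y z : M) :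
    f ![x, y, z, ∑ i, cf i • v i] = ∑ i, cf i * f ![x, y, z, v i] := by
  rw [Fin.sum_univ_four, Fin.sum_univ_four, add3, add3, add3, smul3, smul3, smul3, smul3]

end Lin
end Stmt2Aux

/-- `s₁⁺,s₂⁺,s₃⁺`, the standard frame of the self-dual space `Λ²₊V` associated with an
(oriented) orthonormal basis `e`, the wedge product being encoded by `w`. -/
noncomputable def sPlus {V W : Type*} [NormedAddCommGroup V] [InnerProductSpace ℝ V]
    [AddCommGroup W] [Module ℝ W] (w : V →ₗ[ℝ] V →ₗ[ℝ] W)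
    (e : OrthonormalBasis (Fin 4) ℝ V) : Fin 3 → W :=
  ![w (e 0) (e 1) + w (e 2) (e 3),
    w (e 0) (e 2) + w (e 3) (e 1),
    w (e 0) (e 3) + w (e 1) (e 2)]

/-- `s₁⁻,s₂⁻,s₃⁻`, the standard frame of the anti-self-dual space `Λ²₋V` associated with
an (oriented) orthonormal basis `e`. -/
noncomputable def sMinus {V W : Type*} [NormedAddCommGroup V] [InnerProductSpace ℝ V]
    [AddCommGroup W] [Module ℝ W] (w : V →ₗ[ℝ] V →ₗ[ℝ] W)
    (e : OrthonormalBasis (Fin 4) ℝ V) : Fin 3 → W :=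
  ![w (e 0) (e 1) - w (e 2) (e 3),
    w (e 0) (e 2) - w (e 3) (e 1),
    w (e 0) (e 3) - w (e 1) (e 2)]

open Stmt2Aux

/-- `V` an oriented 4-dimensional real inner product space, `W = Λ²V` with
wedge `w` and inner product `gW` as usual; `Λ²₊V` and `Λ²₋V` (the `±1`-eigenspaces of the
Hodge star) are the spans of `s₁±,s₂±,s₃±` for oriented orthonormal bases.  If
`a ∈ Λ²₊V` and `b ∈ Λ²₋V`, then the endomorphisms `K_a` and `K_b`
(`g(K_a X,Y) = 2g(a, X∧Y)`) commute: `K_a ∘ K_b = K_b ∘ K_a`. -/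
theorem stmt2
    {V : Type*} [NormedAddCommGroup V] [InnerProductSpace ℝ V]
    [FiniteDimensional ℝ V] (hdim : finrank ℝ V = 4)
    (ω : Orientation ℝ V (Fin 4))
    {W : Type*} [AddCommGroup W] [Module ℝ W]
    (w : V →ₗ[ℝ] V →ₗ[ℝ] W)
    (halt : ∀ v : V, w v v = 0)
    (hspan : Submodule.span ℝ {x : W | ∃ u v : V, w u v = x} = ⊤)
    (gW : W →ₗ[ℝ] W →ₗ[ℝ] ℝ)
    (hgWsymm : ∀ a b : W, gW a b = gW b a)
    (hgW : ∀ v₁ v₂ v₃ v₄ : V,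
      gW (w v₁ v₂) (w v₃ v₄)
        = (1/2) * (⟪v₁, v₃⟫ * ⟪v₂, v₄⟫ - ⟪v₁, v₄⟫ * ⟪v₂, v₃⟫))
    (K : W →ₗ[ℝ] (V →ₗ[ℝ] V))
    (hK : ∀ (a : W) (x y : V), ⟪K a x, y⟫ = 2 * gW a (w x y))
    (a b : W)
    (e e' : OrthonormalBasis (Fin 4) ℝ V)
    (hor : e.toBasis.orientation = ω) (hor' : e'.toBasis.orientation = ω)
    (ha : a ∈ Submodule.span ℝ (Set.range (sPlus w e)))
    (hb : b ∈ Submodule.span ℝ (Set.range (sMinus w e'))) :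
    K a ∘ₗ K b = K b ∘ₗ K a := by
  haveI : Fact (finrank ℝ V = 4) := ⟨hdim⟩
  have hw_anti : ∀ x y : V, w y x = - w x y := by
    intro x y
    have h := halt (x + y)
    simp only [map_add, LinearMap.add_apply, halt, zero_add, add_zero] at h
    exact eq_neg_of_add_eq_zero_left h
  have hskew : ∀ (u : W) (x y : V), ⟪K u y, x⟫ = -⟪K u x, y⟫ := by
    intro u x y
    rw [hK, hK, hw_anti x y, map_neg]
    ring
  have hip : ∀ i j, ⟪e i, e j⟫ = if i = j then (1:ℝ) else 0 :=
    orthonormal_iff_ite.mp e.orthonormal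
  have hip' : ∀ i j, ⟪e' i, e' j⟫ = if i = j then (1:ℝ) else 0 :=
    orthonormal_iff_ite.mp e'.orthonormal
  obtain ⟨c, hc⟩ := (Submodule.mem_span_range_iff_exists_fun ℝ).mp ha
  obtain ⟨d, hd⟩ := (Submodule.mem_span_range_iff_exists_fun ℝ).mp hb
  -- the matrix of K a in the basis e
  have hα : ∀ m n, ⟪K a (e m), e n⟫ =
      ![![0, c 0, c 1, c 2], ![-c 0, 0, c 2, -c 1],
        ![-c 1, -c 2, 0, c 0], ![-c 2, c 1, -c 0, 0]] m n := by
    intro m n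
    rw [hK, ← hc, map_sum, LinearMap.sum_apply]
    simp only [map_smul, LinearMap.smul_apply, smul_eq_mul, Fin.sum_univ_three, sPlus]
    fin_cases m <;> fin_cases n <;>
      simp [map_add, LinearMap.add_apply, hgW, hip] <;> ring
  -- the matrix of K b in the basis e'
  have hβ' : ∀ m n, ⟪K b (e' m), e' n⟫ =
      ![![0, d 0, d 1, d 2], ![-d 0, 0, -d 2, d 1],
        ![-d 1, d 2, 0, -d 0], ![-d 2, -d 1, d 0, 0]] m n := by
    intro m n
    rw [hK, ← hd, map_sum, LinearMap.sum_apply]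
    simp only [map_smul, LinearMap.smul_apply, smul_eq_mul, Fin.sum_univ_three, sMinus]
    fin_cases m <;> fin_cases n <;>
      simp [map_add, map_sub, LinearMap.add_apply, LinearMap.sub_apply, hgW, hip'] <;> ring
  have hKb2 : ∀ m, K b (e' m) = ∑ n,
      (![![(0:ℝ), d 0, d 1, d 2], ![-d 0, 0, -d 2, d 1],
        ![-d 1, d 2, 0, -d 0], ![-d 2, -d 1, d 0, 0]] m n) • e' n := by
    intro m
    conv_lhs => rw [← e'.sum_repr' (K b (e' m))]
    exact Finset.sum_congr rfl fun n _ => by rw [real_inner_comm, hβ']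
  -- the anti-self-duality identity in the basis e'
  have hS : ∀ z t : V, (∑ i, ω.volumeForm ![e' i, K b (e' i), z, t]) = -2 * ⟪K b z, t⟫ := by
    intro z t
    have hz : z = ∑ m, ⟪e' m, z⟫ • e' m := (e'.sum_repr' z).symm
    have ht : t = ∑ m, ⟪e' m, t⟫ • e' m := (e'.sum_repr' t).symm
    rw [hz, ht]
    simp only [hKb2, sum1, sum2, sum3]
    simp only [map_sum, map_smul, sum_inner, real_inner_smul_left, inner_sum,
      real_inner_smul_right, hβ']
    simp only [volONB ω e' hor']
    simp only [Fin.sum_univ_four]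
    norm_num [ZZ, fz0, fz1, fz2, fz3]
    simp only [Matrix.cons_val]
    ring
  -- Parseval: transport the sum to the basis e
  have hsum : ∀ m n : Fin 4, (∑ i, ⟪e m, e' i⟫ * ⟪e n, e' i⟫) = if m = n then (1:ℝ) else 0 := by
    intro m n
    have h := e'.sum_inner_mul_inner (e m) (e n)
    rw [hip m n] at h
    rw [← h]
    exact Finset.sum_congr rfl fun i _ => by rw [real_inner_comm (e' i) (e n)]
  have hPar : ∀ z t : V, (∑ i, ω.volumeForm ![e i, K b (e i), z, t])
      = ∑ i, ω.volumeForm ![e' i, K b (e' i), z, t] := by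
    intro z t
    have he2 : ∀ i, e' i = ∑ m, ⟪e m, e' i⟫ • e m := fun i => (e.sum_repr' (e' i)).symm
    have key : ∀ (X : Fin 4 → Fin 4 → ℝ),
        (∑ i : Fin 4, ∑ m : Fin 4, ∑ n : Fin 4, ⟪e m, e' i⟫ * (⟪e n, e' i⟫ * X m n))
          = ∑ m : Fin 4, X m m := by
      intro X
      rw [Finset.sum_comm]
      have h1 : ∀ m : Fin 4,
          (∑ i : Fin 4, ∑ n : Fin 4, ⟪e m, e' i⟫ * (⟪e n, e' i⟫ * X m n))
            = ∑ n : Fin 4, (if m = n then (1:ℝ) else 0) * X m n := by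
        intro m
        rw [Finset.sum_comm]
        refine Finset.sum_congr rfl fun n _ => ?_
        rw [← hsum m n, Finset.sum_mul]
        exact Finset.sum_congr rfl fun i _ => by ring
      simp only [h1, ite_mul, one_mul, zero_mul]
      exact Finset.sum_congr rfl fun m _ => by simp
    have step1 : ∀ i : Fin 4, ω.volumeForm ![e' i, K b (e' i), z, t]
        = ∑ m, ∑ n, ⟪e m, e' i⟫ * (⟪e n, e' i⟫ * ω.volumeForm ![e n, K b (e m), z, t]) := by
      intro i
      conv_lhs => rw [he2 i]
      rw [map_sum]
      simp only [map_smul, sum0, sum1, Finset.mul_sum]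
    conv_rhs => rw [Finset.sum_congr rfl (fun i _ => step1 i)]
    rw [key (fun m n => ω.volumeForm ![e n, K b (e m), z, t])]
  -- the anti-self-duality relations in the basis e
  have hrel : ∀ m n : Fin 4, (∑ i, ω.volumeForm ![e i, K b (e i), e m, e n])
      = -2 * ⟪K b (e m), e n⟫ := fun m n => (hPar _ _).trans (hS _ _)
  have hKb : ∀ i, K b (e i) = ∑ j, ⟪K b (e i), e j⟫ • e j := by
    intro i
    conv_lhs => rw [← e.sum_repr' (K b (e i))]
    exact Finset.sum_congr rfl fun j _ => by rw [real_inner_comm]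
  have hev : ∀ m n : Fin 4, (∑ i, ω.volumeForm ![e i, K b (e i), e m, e n])
      = ∑ i, ∑ j, ⟪K b (e i), e j⟫ * ((ZZ i j m n : ℤ) : ℝ) := by
    intro m n
    refine Finset.sum_congr rfl fun i _ => ?_
    conv_lhs => rw [hKb i]
    rw [sum1]
    simp only [volONB ω e hor]
  have h23 : ⟪K b (e 2), e 3⟫ = -⟪K b (e 0), e 1⟫ := by
    have h := hrel 0 1
    rw [hev 0 1] at h
    simp only [Fin.sum_univ_four] at h
    norm_num [ZZ, fz0, fz1, fz2, fz3] at h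
    linarith [h, hskew b (e 2) (e 3)]
  have h13 : ⟪K b (e 1), e 3⟫ = ⟪K b (e 0), e 2⟫ := by
    have h := hrel 0 2
    rw [hev 0 2] at h
    simp only [Fin.sum_univ_four] at h
    norm_num [ZZ, fz0, fz1, fz2, fz3] at h
    linarith [h, hskew b (e 1) (e 3)]
  have h12 : ⟪K b (e 1), e 2⟫ = -⟪K b (e 0), e 3⟫ := by
    have h := hrel 0 3
    rw [hev 0 3] at h
    simp only [Fin.sum_univ_four] at h
    norm_num [ZZ, fz0, fz1, fz2, fz3] at h
    linarith [h, hskew b (e 1) (e 2)]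
  obtain ⟨b1, hb1⟩ : ∃ x, ⟪K b (e 0), e 1⟫ = x := ⟨_, rfl⟩
  obtain ⟨b2, hb2⟩ : ∃ x, ⟪K b (e 0), e 2⟫ = x := ⟨_, rfl⟩
  obtain ⟨b3, hb3⟩ : ∃ x, ⟪K b (e 0), e 3⟫ = x := ⟨_, rfl⟩
  have hβ : ∀ m n, ⟪K b (e m), e n⟫ =
      ![![0, b1, b2, b3], ![-b1, 0, -b3, b2],
        ![-b2, b3, 0, -b1], ![-b3, -b2, b1, 0]] m n := by
    intro m n
    fin_cases m <;> fin_cases n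
    · show ⟪K b (e 0), e 0⟫ = 0; linarith [hskew b (e 0) (e 0)]
    · show ⟪K b (e 0), e 1⟫ = b1; exact hb1
    · show ⟪K b (e 0), e 2⟫ = b2; exact hb2
    · show ⟪K b (e 0), e 3⟫ = b3; exact hb3
    · show ⟪K b (e 1), e 0⟫ = -b1; rw [← hb1]; linarith [hskew b (e 0) (e 1)]
    · show ⟪K b (e 1), e 1⟫ = 0; linarith [hskew b (e 1) (e 1)]
    · show ⟪K b (e 1), e 2⟫ = -b3; rw [← hb3]; exact h12
    · show ⟪K b (e 1), e 3⟫ = b2; rw [← hb2]; exact h13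
    · show ⟪K b (e 2), e 0⟫ = -b2; rw [← hb2]; linarith [hskew b (e 0) (e 2)]
    · show ⟪K b (e 2), e 1⟫ = b3; rw [← hb3]; linarith [hskew b (e 1) (e 2), h12]
    · show ⟪K b (e 2), e 2⟫ = 0; linarith [hskew b (e 2) (e 2)]
    · show ⟪K b (e 2), e 3⟫ = -b1; rw [← hb1]; exact h23
    · show ⟪K b (e 3), e 0⟫ = -b3; rw [← hb3]; linarith [hskew b (e 0) (e 3)]
    · show ⟪K b (e 3), e 1⟫ = -b2; rw [← hb2]; linarith [hskew b (e 1) (e 3), h13]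
    · show ⟪K b (e 3), e 2⟫ = b1; rw [← hb1]; linarith [hskew b (e 2) (e 3), h23]
    · show ⟪K b (e 3), e 3⟫ = 0; linarith [hskew b (e 3) (e 3)]
  -- conclusion
  have hvec : ∀ x y : V, (∀ n, ⟪x, e n⟫ = ⟪y, e n⟫) → x = y := by
    intro x y h
    rw [← e.sum_repr' x, ← e.sum_repr' y]
    refine Finset.sum_congr rfl fun n _ => ?_
    rw [real_inner_comm x (e n), h n, ← real_inner_comm y (e n)]
  have hcomp : ∀ (u₁ u₂ : W) (m n : Fin 4),
      ⟪K u₁ (K u₂ (e m)), e n⟫ = ∑ j, ⟪K u₂ (e m), e j⟫ * ⟪K u₁ (e j), e n⟫ := by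
    intro u₁ u₂ m n
    conv_lhs => rw [show K u₂ (e m) = ∑ j, ⟪K u₂ (e m), e j⟫ • e j from by
      conv_lhs => rw [← e.sum_repr' (K u₂ (e m))]
      exact Finset.sum_congr rfl fun j _ => by rw [real_inner_comm]]
    rw [map_sum, sum_inner]
    exact Finset.sum_congr rfl fun j _ => by rw [map_smul, real_inner_smul_left]
  refine e.toBasis.ext fun m => ?_
  simp only [LinearMap.coe_comp, Function.comp_apply, OrthonormalBasis.coe_toBasis]
  refine hvec _ _ fun n => ?_
  rw [hcomp a b m n, hcomp b a m n]
  fin_cases m <;> fin_cases n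
  all_goals simp [Fin.sum_univ_four, hα, hβ]
  all_goals ring
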